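/- Let d ≥ 1 and let A : (Fin d → Fin n) → ℝ be an order-d dimension-n tensor each of whose entries is 0 or 1, and suppose that exactly t multi-indices x satisfy A x = 0. Then per(A) ≥ ((n^(d-1) : ℤ) - t) * ((n-1)!)^(d-1), where the right-hand side is understood as a real number via casting. -/
import Mathlib


/-- The permanent (1-permanent) of an order-`d` dimension-`n` tensor:
the sum over all families `π : Fin d → Equiv.Perm (Fin n)` with `π 0 = 1`
of the products of the corresponding diagonal entries. -/
noncomputable def tensorPer {d n : ℕ} (hd : 1 ≤ d) (A : (Fin d → Fin n) → ℝ) : ℝ :=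
  ∑ π ∈ Finset.univ.filter (fun π : Fin d → Equiv.Perm (Fin n) => π ⟨0, hd⟩ = 1),
    ∏ i : Fin n, A (fun k => π k i)


open Finset Equiv

lemma decomposeFin_fst {m : ℕ} (τ : Perm (Fin (m+1))) :
    (Equiv.Perm.decomposeFin τ).1 = τ 0 := by
  conv_rhs => rw [← Equiv.symm_apply_apply Equiv.Perm.decomposeFin τ]
  rw [show Equiv.Perm.decomposeFin τ =
    ((Equiv.Perm.decomposeFin τ).1, (Equiv.Perm.decomposeFin τ).2) from rfl,
    Equiv.Perm.decomposeFin_symm_apply_zero]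

lemma card_perm_fiber (m : ℕ) (a b : Fin (m+1)) :
    (Finset.univ.filter (fun σ : Perm (Fin (m+1)) => σ a = b)).card = m.factorial := by
  have e1 : {σ : Perm (Fin (m+1)) // σ a = b} ≃ {τ : Perm (Fin (m+1)) // τ 0 = b} :=
    Equiv.subtypeEquiv (Equiv.mulRight (Equiv.swap 0 a)) (by
      intro σ
      simp [Equiv.Perm.mul_apply])
  have e2 : {τ : Perm (Fin (m+1)) // τ 0 = b} ≃ Perm (Fin m) :=
    { toFun := fun τ => (Equiv.Perm.decomposeFin τ.1).2
      invFun := fun e => ⟨Equiv.Perm.decomposeFin.symm (b, e), by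
        simp [Equiv.Perm.decomposeFin_symm_apply_zero]⟩
      left_inv := by
        rintro ⟨τ, hτ⟩
        ext1
        have h1 : (Equiv.Perm.decomposeFin τ).1 = b := (decomposeFin_fst τ).trans hτ
        dsimp only
        rw [← h1, Prod.mk.eta, Equiv.symm_apply_apply]
      right_inv := by intro e; simp }
  have hc := Fintype.card_congr (e1.trans e2)
  rw [Fintype.card_subtype, Fintype.card_perm, Fintype.card_fin] at hc
  exact hc

lemma card_pi_filter {d : ℕ} {β : Type*} [Fintype β] [DecidableEq β] (P : Fin d → β → Prop)
    [∀ k b, Decidable (P k b)] :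
    (Finset.univ.filter (fun π : Fin d → β => ∀ k, P k (π k))).card
      = ∏ k, (Finset.univ.filter (P k)).card := by
  rw [← Fintype.card_subtype]
  rw [Fintype.card_congr (Equiv.subtypePiEquivPi (p := P))]
  rw [Fintype.card_pi]
  exact Finset.prod_congr rfl (fun k _ => Fintype.card_subtype _)

lemma prod_const_except {d : ℕ} (i0 : Fin d) (c : ℕ) (f : Fin d → ℕ)
    (h0 : f i0 = 1) (h : ∀ k, k ≠ i0 → f k = c) :
    ∏ k, f k = c ^ (d - 1) := by
  rw [← Finset.prod_erase Finset.univ h0]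
  rw [Finset.prod_congr rfl (fun k hk => h k (Finset.ne_of_mem_erase hk))]
  rw [Finset.prod_const, Finset.card_erase_of_mem (Finset.mem_univ i0), Finset.card_univ,
    Fintype.card_fin]


/-- Dow–Gibson bound. -/
theorem per_lower_bound_of_zeros {d n : ℕ} (hd : 1 ≤ d) (A : (Fin d → Fin n) → ℝ)
    (h01 : ∀ x, A x = 0 ∨ A x = 1) (t : ℕ)
    (ht : t = (Finset.univ.filter (fun x : Fin d → Fin n => A x = 0)).card) :
    ((((n : ℤ) ^ (d - 1) - (t : ℤ)) * ((Nat.factorial (n - 1) : ℤ)) ^ (d - 1) : ℤ) : ℝ)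
      ≤ tensorPer hd A := by
  classical
  set i0 : Fin d := ⟨0, hd⟩ with hi0
  -- per as a cardinality of the "good" set
  set S : Finset (Fin d → Perm (Fin n)) :=
    Finset.univ.filter (fun π : Fin d → Perm (Fin n) => π i0 = 1) with hS
  set good : (Fin d → Perm (Fin n)) → Prop :=
    fun π => ∀ i, A (fun k => π k i) = 1 with hgood
  have hper : tensorPer hd A = ((S.filter good).card : ℝ) := by
    rw [tensorPer]
    have hrw : Finset.univ.filter (fun π : Fin d → Perm (Fin n) => π ⟨0, hd⟩ = 1) = S := rfl
    rw [hrw, Finset.card_filter, Nat.cast_sum]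
    refine Finset.sum_congr rfl (fun π hπ => ?_)
    by_cases hg : ∀ i, A (fun k => π k i) = 1
    · rw [if_pos hg]
      rw [Finset.prod_eq_one (fun i _ => hg i)]
      norm_num
    · rw [if_neg hg]
      push_neg at hg
      obtain ⟨i, hi⟩ := hg
      have : A (fun k => π k i) = 0 := (h01 _).resolve_right hi
      rw [Finset.prod_eq_zero (Finset.mem_univ i) this]
      norm_num
  rcases n with _ | m
  · -- n = 0 : there are no multi-indices, t = 0, per = 1
    have ht0 : t = 0 := by
      rw [ht, Finset.card_eq_zero]
      apply Finset.eq_empty_of_forall_notMem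
      intro x _
      exact (x i0).elim0
    have hS1 : S.filter good = S := by
      apply Finset.filter_true_of_mem
      intro π _ i
      exact i.elim0
    have hScard : S.card = 1 := by
      rw [hS, Finset.filter_true_of_mem (fun π _ => Subsingleton.elim _ _),
        Finset.card_univ, Fintype.card_fun, Fintype.card_fin]
      simp
    rw [hper, hS1, hScard, ht0]
    push_cast
    have : ((0:ℝ)) ^ (d-1) ≤ 1 := by
      rcases Nat.eq_zero_or_pos (d-1) with h | h
      · rw [h]; norm_num
      · rw [zero_pow (by omega : d - 1 ≠ 0)]; norm_num
    simpa using this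
  · -- n = m + 1
    set Z : Finset (Fin d → Fin (m+1)) :=
      Finset.univ.filter (fun x => A x = 0) with hZ
    -- cardinality of S
    have hScard : S.card = ((m+1).factorial) ^ (d - 1) := by
      rw [hS]
      rw [show (Finset.univ.filter (fun π : Fin d → Perm (Fin (m+1)) => π i0 = 1))
          = Finset.univ.filter (fun π => ∀ k, (k = i0 → π k = 1)) by
        apply Finset.filter_congr
        intro π _
        constructor
        · rintro h k rfl; exact h
        · intro h; exact h i0 rfl]
      rw [card_pi_filter (β := Perm (Fin (m+1))) (fun k σ => k = i0 → σ = 1)]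
      apply prod_const_except i0
      · simp [Finset.filter_eq']
      · intro k hk
        rw [Finset.filter_true_of_mem (fun σ _ => by intro h; exact absurd h hk)]
        rw [Finset.card_univ, Fintype.card_perm, Fintype.card_fin]
    -- the bad set is covered by the zero entries
    set T : (Fin d → Fin (m+1)) → Finset (Fin d → Perm (Fin (m+1))) :=
      fun x => Finset.univ.filter
        (fun π => ∀ k, ((k = i0 → π k = 1) ∧ π k (x i0) = x k)) with hT
    have hTcard : ∀ x, (T x).card = (m.factorial) ^ (d - 1) := by
      intro x
      rw [hT]
      dsimp only
      rw [card_pi_filter (fun (k : Fin d) (σ : Perm (Fin (m+1))) =>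
        (k = i0 → σ = 1) ∧ σ (x i0) = x k)]
      apply prod_const_except i0
      · rw [show (Finset.univ.filter fun σ : Perm (Fin (m+1)) =>
            ((i0 = i0 → σ = 1) ∧ σ (x i0) = x i0)) = Finset.univ.filter (fun σ => σ = 1) by
          apply Finset.filter_congr
          intro σ _
          constructor
          · rintro ⟨h, _⟩; exact h rfl
          · rintro rfl; exact ⟨fun _ => rfl, rfl⟩]
        simp [Finset.filter_eq']
      · intro k hk
        rw [show (Finset.univ.filter fun σ : Perm (Fin (m+1)) =>
            ((k = i0 → σ = 1) ∧ σ (x i0) = x k))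
            = Finset.univ.filter (fun σ => σ (x i0) = x k) by
          apply Finset.filter_congr
          intro σ _
          constructor
          · rintro ⟨_, h⟩; exact h
          · intro h; exact ⟨fun hki => absurd hki hk, h⟩]
        exact card_perm_fiber m _ _
    have hsubset : S.filter (fun π => ¬ good π) ⊆ Z.biUnion T := by
      intro π hπ
      rw [Finset.mem_filter] at hπ
      obtain ⟨hπS, hπbad⟩ := hπ
      rw [hS, Finset.mem_filter] at hπS
      have hπ1 : π i0 = 1 := hπS.2
      have hπbad' : ¬ ∀ i, A (fun k => π k i) = 1 := hπbad
      push_neg at hπbad'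
      obtain ⟨i, hi⟩ := hπbad'
      have hAx : A (fun k => π k i) = 0 := (h01 _).resolve_right hi
      rw [Finset.mem_biUnion]
      refine ⟨fun k => π k i, ?_, ?_⟩
      · rw [hZ, Finset.mem_filter]; exact ⟨Finset.mem_univ _, hAx⟩
      · rw [hT, Finset.mem_filter]
        refine ⟨Finset.mem_univ _, fun k => ⟨fun hk => hk ▸ hπ1, ?_⟩⟩
        show π k (π i0 i) = π k i
        rw [hπ1]
        rfl
    have hbad : (S.filter (fun π => ¬ good π)).card ≤ t * (m.factorial) ^ (d - 1) := by
      calc (S.filter (fun π => ¬ good π)).card ≤ (Z.biUnion T).card :=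
            Finset.card_le_card hsubset
        _ ≤ ∑ x ∈ Z, (T x).card := Finset.card_biUnion_le
        _ = ∑ x ∈ Z, (m.factorial) ^ (d - 1) := Finset.sum_congr rfl (fun x _ => hTcard x)
        _ = Z.card * (m.factorial) ^ (d - 1) := by rw [Finset.sum_const, smul_eq_mul]
        _ = t * (m.factorial) ^ (d - 1) := by rw [ht]
    have hsplit : (S.filter good).card + (S.filter (fun π => ¬ good π)).card = S.card :=
      Finset.card_filter_add_card_filter_not (fun π => good π)
    -- assemble over ℤ
    rw [hper]
    rw [show ((m+1 : ℕ) : ℤ) = (m : ℤ) + 1 by push_cast; ring]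
    have key : ((m : ℤ) + 1) ^ (d-1) * (m.factorial : ℤ) ^ (d-1) - t * (m.factorial : ℤ) ^ (d-1)
        ≤ ((S.filter good).card : ℤ) := by
      have h1 : (S.card : ℤ) = ((m+1).factorial : ℤ) ^ (d-1) := by
        rw [hScard]; push_cast; ring
      have h2 : ((S.filter (fun π => ¬ good π)).card : ℤ) ≤ t * (m.factorial : ℤ) ^ (d-1) := by
        exact_mod_cast hbad
      have h3 : ((S.filter good).card : ℤ)
          = (S.card : ℤ) - ((S.filter (fun π => ¬ good π)).card : ℤ) := by
        rw [← hsplit]; push_cast; ring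
      rw [h3, h1]
      have hfac : ((m+1).factorial : ℤ) = ((m:ℤ)+1) * (m.factorial : ℤ) := by
        rw [Nat.factorial_succ]; push_cast; ring
      rw [hfac, mul_pow]
      linarith
    have : (((m : ℤ) + 1) ^ (d - 1) - (t : ℤ)) * ((m.factorial : ℤ)) ^ (d - 1)
        ≤ ((S.filter good).card : ℤ) := by
      calc (((m : ℤ) + 1) ^ (d - 1) - (t : ℤ)) * ((m.factorial : ℤ)) ^ (d - 1)
          = ((m : ℤ) + 1) ^ (d-1) * (m.factorial : ℤ) ^ (d-1)
            - t * (m.factorial : ℤ) ^ (d-1) := by ring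
        _ ≤ _ := key
    calc ((((((m:ℤ)+1)) ^ (d - 1) - (t : ℤ)) * ((Nat.factorial (m+1-1) : ℤ)) ^ (d - 1) : ℤ) : ℝ)
        = (((((m : ℤ) + 1) ^ (d - 1) - (t : ℤ)) * ((m.factorial : ℤ)) ^ (d - 1) : ℤ) : ℝ) := by
          norm_num
      _ ≤ (((S.filter good).card : ℤ) : ℝ) := by exact_mod_cast this
      _ = ((S.filter good).card : ℝ) := by push_cast; ring
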